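/- Let A be a finite alphabet with k = #A ≥ 2, and let ω = ω₁⋯ω_{k^n+n−1} be a de Bruijn sequence of order n in A. Then the first n − 1 letters of ω coincide with its last n − 1 letters; that is, ω_{k^n + i} = ω_i for all i = 1, …, n − 1. -/

import Mathlib

/-- A word `w` of length `L` over the alphabet `A` is a (non-cyclic) de Bruijn word of
order `m`: every word of length `m` over `A` occurs exactly once as a consecutive
substring of `w`. (This is applied with `L = k^m + m - 1` where `k = #A`.) -/
def IsDeBruijnWord {A : Type*} (m L : ℕ) (w : Fin L → A) : Prop :=
  ∀ v : Fin m → A, ∃! j : ℕ,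
    j + m ≤ L ∧ ∀ (i : Fin m) (h : j + (i : ℕ) < L), w ⟨j + (i : ℕ), h⟩ = v i

section Aux

variable {A : Type*} [Fintype A] {k m : ℕ}

/-- The window of length `m+1` starting at position `j`. -/
def Fw (w : Fin (k ^ (m+1) + m) → A) (j : Fin (k ^ (m+1))) : Fin (m+1) → A :=
  fun i => w ⟨j + i, by omega⟩

/-- The window of length `m` starting at position `j`. -/
def Gw (w : Fin (k ^ (m+1) + m) → A) (j : Fin (k ^ (m+1) + 1)) : Fin m → A :=
  fun i => w ⟨j + i, by omega⟩

set_option maxHeartbeats 1000000 in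
theorem aux (hk : Fintype.card A = k) (hk2 : 2 ≤ k)
    (w : Fin (k ^ (m+1) + m) → A)
    (hw : ∀ v : Fin (m+1) → A, ∃! j : ℕ,
      j + (m+1) ≤ k ^ (m+1) + m ∧
        ∀ (i : Fin (m+1)) (h : j + (i : ℕ) < k ^ (m+1) + m), w ⟨j + (i : ℕ), h⟩ = v i) :
    ∀ (i : ℕ), i < m → ∀ (h1 : k ^ (m+1) + i < k ^ (m+1) + m) (h2 : i < k ^ (m+1) + m),
      w ⟨k ^ (m+1) + i, h1⟩ = w ⟨i, h2⟩ := by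
  classical
  have hN1 : 1 ≤ k ^ (m+1) := Nat.one_le_pow _ _ (by omega)
  have hFbij : Function.Bijective (Fw (k := k) (m := m) w) := by
    constructor
    · intro a b hab
      obtain ⟨j, -, hjuniq⟩ := hw (Fw w a)
      have ha : (a : ℕ) = j := hjuniq a ⟨by omega, fun i h => rfl⟩
      have hb : (b : ℕ) = j := hjuniq b ⟨by omega, fun i h => congrFun hab.symm i⟩
      exact Fin.ext (ha.trans hb.symm)
    · intro v
      obtain ⟨j, ⟨hjle, hjv⟩, -⟩ := hw v
      exact ⟨⟨j, by omega⟩, funext fun i => hjv i (by omega)⟩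
  have hpre : ∀ j : Fin (k ^ (m+1)), Fin.init (Fw w j) = Gw w j.castSucc := by
    intro j; funext i
    exact congrArg w (Fin.ext (by simp))
  have hsuf : ∀ j : Fin (k ^ (m+1)), Fin.tail (Fw w j) = Gw w j.succ := by
    intro j; funext i
    exact congrArg w (Fin.ext (by simp [Fin.val_succ]; omega))
  have cInit : ∀ u : Fin m → A, Fintype.card {v : Fin (m+1) → A // Fin.init v = u} = k := by
    intro u
    rw [← hk]
    exact Fintype.card_congr
      ⟨fun s => s.1 (Fin.last m), fun a => ⟨Fin.snoc u a, by simp⟩,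
        fun s => Subtype.ext (by obtain ⟨v, rfl⟩ := s; exact Fin.snoc_init_self v),
        fun a => by simp⟩
  have cTail : ∀ u : Fin m → A, Fintype.card {v : Fin (m+1) → A // Fin.tail v = u} = k := by
    intro u
    rw [← hk]
    exact Fintype.card_congr
      ⟨fun s => s.1 0, fun a => ⟨Fin.cons a u, by simp⟩,
        fun s => Subtype.ext (by obtain ⟨v, rfl⟩ := s; exact Fin.cons_self_tail v),
        fun a => by simp⟩
  have c1 : ∀ u : Fin m → A,
      Fintype.card {j : Fin (k ^ (m+1)) // Gw w j.castSucc = u} = k := by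
    intro u
    exact (Fintype.card_congr ((Equiv.ofBijective _ hFbij).subtypeEquiv
      (p := fun j => Gw w j.castSucc = u) (q := fun v => Fin.init v = u)
      (fun j => by show Gw w j.castSucc = u ↔ Fin.init (Fw w j) = u; rw [hpre j]))).trans (cInit u)
  have c2 : ∀ u : Fin m → A,
      Fintype.card {j : Fin (k ^ (m+1)) // Gw w j.succ = u} = k := by
    intro u
    exact (Fintype.card_congr ((Equiv.ofBijective _ hFbij).subtypeEquiv
      (p := fun j => Gw w j.succ = u) (q := fun v => Fin.tail v = u)
      (fun j => by show Gw w j.succ = u ↔ Fin.tail (Fw w j) = u; rw [hsuf j]))).trans (cTail u)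
  set u : Fin m → A := Gw w 0 with hu
  set S : Finset (Fin (k ^ (m+1) + 1)) := Finset.univ.filter (fun j => Gw w j = u) with hS
  have h0S : (0 : Fin (k ^ (m+1) + 1)) ∈ S := by simp [hS, hu]
  have hErase1 : (S.erase (Fin.last (k ^ (m+1)))).card = k := by
    rw [show S.erase (Fin.last (k ^ (m+1)))
        = (Finset.univ.filter (fun j : Fin (k ^ (m+1)) => Gw w j.castSucc = u)).image
            Fin.castSucc from ?_]
    · rw [Finset.card_image_of_injective _ (Fin.castSucc_injective _), ← Fintype.card_subtype]
      exact c1 u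
    · ext j
      simp only [Finset.mem_erase, Finset.mem_filter, Finset.mem_univ, true_and,
        Finset.mem_image, hS]
      constructor
      · rintro ⟨hne, hj⟩
        obtain ⟨j', rfl⟩ := Fin.exists_castSucc_eq.2 hne
        exact ⟨j', hj, rfl⟩
      · rintro ⟨j', hj', rfl⟩
        exact ⟨(Fin.castSucc_lt_last j').ne, hj'⟩
  have hErase2 : (S.erase 0).card = k := by
    rw [show S.erase 0
        = (Finset.univ.filter (fun j : Fin (k ^ (m+1)) => Gw w j.succ = u)).image
            Fin.succ from ?_]
    · rw [Finset.card_image_of_injective _ (Fin.succ_injective _), ← Fintype.card_subtype]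
      exact c2 u
    · ext j
      simp only [Finset.mem_erase, Finset.mem_filter, Finset.mem_univ, true_and,
        Finset.mem_image, hS]
      constructor
      · rintro ⟨hne, hj⟩
        obtain ⟨j', rfl⟩ := Fin.exists_succ_eq.2 hne
        exact ⟨j', hj, rfl⟩
      · rintro ⟨j', hj', rfl⟩
        exact ⟨Fin.succ_ne_zero j', hj'⟩
  have hlast : Fin.last (k ^ (m+1)) ∈ S := by
    by_contra hnot
    have e1 : S.erase (Fin.last (k ^ (m+1))) = S := Finset.erase_eq_of_notMem hnot
    have e2 : (S.erase 0).card = S.card - 1 := Finset.card_erase_of_mem h0S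
    have hpos : 1 ≤ S.card := Finset.card_pos.2 ⟨0, h0S⟩
    rw [e1] at hErase1
    omega
  have hGeq : Gw w (Fin.last (k ^ (m+1))) = Gw w 0 :=
    (Finset.mem_filter.1 hlast).2
  intro i hi h1 h2
  have h3 := congrFun hGeq ⟨i, hi⟩
  have e1 : Gw w (Fin.last (k ^ (m+1))) ⟨i, hi⟩ = w ⟨k ^ (m+1) + i, h1⟩ :=
    congrArg w (Fin.ext (by simp))
  have e2 : Gw w 0 ⟨i, hi⟩ = w ⟨i, h2⟩ :=
    congrArg w (Fin.ext (by simp))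
  rw [← e1, ← e2, h3]

end Aux

/-- The first `n − 1` letters of a de Bruijn sequence of order `n` coincide with its last
`n − 1` letters: in 0-indexed terms, `w (k^n + i) = w i` for all `i < n - 1`. -/
theorem statement10 (A : Type*) [Fintype A] (k : ℕ) (hk : k = Fintype.card A)
    (hk2 : 2 ≤ k) (n : ℕ) (hn : 1 ≤ n)
    (w : Fin (k ^ n + n - 1) → A) (hw : IsDeBruijnWord n (k ^ n + n - 1) w) :
    ∀ (i : ℕ), i < n - 1 → ∀ (h1 : k ^ n + i < k ^ n + n - 1) (h2 : i < k ^ n + n - 1),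
      w ⟨k ^ n + i, h1⟩ = w ⟨i, h2⟩ := by
  obtain ⟨m, rfl⟩ : ∃ m, n = m + 1 := ⟨n - 1, by omega⟩
  intro i hi h1 h2
  exact aux hk.symm hk2 w hw i (by omega) h1 h2
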